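/- Let e be idempotent mod m, b, c ∈ R_m^e, and D = D_m(b,c) = gcd{n : 1 ≤ n ≤ |b|_m, b^n ∈ orb(c)}. Then orb(b) ∩ orb(c) = orb(b^D) and |orb(b) ∩ orb(c)| = |b|_m / D. -/
import Mathlib


/-- `e` is an idempotent residue modulo `m`: `e^2 ≡ e (mod m)`. -/
def Idem (m : ℕ) (e : ZMod m) : Prop := e ^ 2 = e

/-- The order `|a|_m`: the least `n ≥ 1` such that `a^n` is idempotent mod `m`. -/
noncomputable def ord (m : ℕ) (a : ZMod m) : ℕ := sInf {n | 1 ≤ n ∧ Idem m (a ^ n)}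

/-- `a` is regular modulo `m`: `a^(|a|_m + 1) ≡ a (mod m)`. -/
noncomputable def Reg (m : ℕ) (a : ZMod m) : Prop := a ^ (ord m a + 1) = a

/-- `R_m^e`: the regular residues mod `m` whose idempotent power is `e`. -/
noncomputable def Rme (m : ℕ) (e : ZMod m) : Set (ZMod m) :=
  {a | Reg m a ∧ a ^ (ord m a) = e}

/-- The orbit of `a` modulo `m`: `{a^j mod m : 1 ≤ j ≤ |a|_m}`. -/
noncomputable def orb (m : ℕ) (a : ZMod m) : Finset (ZMod m) :=
  (Finset.Icc 1 (ord m a)).image (a ^ ·)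

set_option linter.unusedSectionVars false

section Helpers
variable {m : ℕ} [NeZero m]

lemma period_mul {a : ZMod m} {i p : ℕ} (hstep : ∀ n, i ≤ n → a ^ (n + p) = a ^ n) :
    ∀ n, i ≤ n → ∀ k, a ^ (n + k * p) = a ^ n := by
  intro n hn k
  induction k with
  | zero => simp
  | succ k ih =>
    have h : n + (k + 1) * p = (n + k * p) + p := by ring
    rw [h, hstep _ (by omega), ih]

lemma exists_idem_pow (a : ZMod m) : ∃ n, 1 ≤ n ∧ Idem m (a ^ n) := by
  obtain ⟨i, j, hne, hij⟩ := Finite.exists_ne_map_eq_of_infinite (fun n : ℕ => a ^ n)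
  wlog hlt : i < j generalizing i j
  · exact this j i hne.symm hij.symm (by omega)
  set p := j - i with hp
  have hp1 : 1 ≤ p := by omega
  have hstep : ∀ n, i ≤ n → a ^ (n + p) = a ^ n := by
    intro n hn
    rw [show n + p = (n - i) + (i + p) by omega, pow_add, show i + p = j by omega,
      ← hij, ← pow_add, show n - i + i = n by omega]
  have key := period_mul hstep
  refine ⟨(i + 1) * p, Nat.mul_pos (by omega) hp1, ?_⟩
  have h1 : i ≤ (i + 1) * p := le_trans (by omega) (Nat.le_mul_of_pos_right _ hp1)
  show (a ^ ((i+1)*p)) ^ 2 = a ^ ((i+1)*p)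
  rw [← pow_mul, show (i+1)*p*2 = (i+1)*p + (i+1)*p by ring, key _ h1]

lemma ord_spec (a : ZMod m) : 1 ≤ ord m a ∧ Idem m (a ^ ord m a) :=
  Nat.sInf_mem (exists_idem_pow a)

lemma ord_min {a : ZMod m} {n : ℕ} (h1 : 1 ≤ n) (h2 : Idem m (a ^ n)) : ord m a ≤ n :=
  Nat.sInf_le ⟨h1, h2⟩

lemma pow_add_ord {a : ZMod m} (ha : Reg m a) {n : ℕ} (hn : 1 ≤ n) :
    a ^ (n + ord m a) = a ^ n := by
  obtain ⟨k, rfl⟩ : ∃ k, n = k + 1 := ⟨n - 1, by omega⟩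
  rw [show k + 1 + ord m a = k + (ord m a + 1) by ring, pow_add, ha, ← pow_succ]

lemma pow_add_mul_ord {a : ZMod m} (ha : Reg m a) {n : ℕ} (hn : 1 ≤ n) (k : ℕ) :
    a ^ (n + k * ord m a) = a ^ n :=
  period_mul (fun n hn => pow_add_ord ha hn) n hn k

lemma pow_reduce {a : ZMod m} (ha : Reg m a) {n : ℕ} (hn : 1 ≤ n) :
    ∃ r q, n = r + q * ord m a ∧ 1 ≤ r ∧ r ≤ ord m a ∧ a ^ n = a ^ r := by
  have hN1 : 1 ≤ ord m a := (ord_spec a).1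
  by_cases h : ord m a ∣ n
  · obtain ⟨q, rfl⟩ := h
    obtain ⟨q', rfl⟩ : ∃ q', q = q' + 1 := by
      refine ⟨q - 1, ?_⟩
      rcases Nat.eq_zero_or_pos q with h' | h'
      · subst h'; simp at hn
      · omega
    refine ⟨ord m a, q', by ring, hN1, le_refl _, ?_⟩
    rw [show ord m a * (q' + 1) = ord m a + q' * ord m a by ring]
    exact pow_add_mul_ord ha hN1 _
  · have hmod : ¬ (n % ord m a = 0) := fun h' => h (Nat.dvd_of_mod_eq_zero h')
    have hlt := Nat.mod_lt n (show 0 < ord m a by omega)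
    refine ⟨n % ord m a, n / ord m a, (Nat.mod_add_div' n (ord m a)).symm, by omega, by omega, ?_⟩
    conv_lhs => rw [← Nat.mod_add_div' n (ord m a)]
    exact pow_add_mul_ord ha (by omega) _

lemma pow_inj {a : ZMod m} (ha : Reg m a) {i j : ℕ} (h1 : 1 ≤ i) (hij : i ≤ j)
    (hj : j ≤ ord m a) (heq : a ^ i = a ^ j) : i = j := by
  by_contra hne
  have hlt : i < j := by omega
  set N := ord m a with hNdef
  set p := j - i with hp
  have hp1 : 1 ≤ p := by omega
  have hpN : p < N := by omega
  have hstep : ∀ n, i ≤ n → a ^ (n + p) = a ^ n := by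
    intro n hn
    rw [show n + p = (n - i) + (i + p) by omega, pow_add, show i + p = j by omega,
      ← heq, ← pow_add, show n - i + i = n by omega]
  have key := period_mul hstep
  have hchoice : ∃ k, i + 1 ≤ k ∧ ¬ N ∣ k * p := by
    by_contra h
    push_neg at h
    have h1' := h (i+1) (le_refl _)
    have h2' := h (i+2) (by omega)
    have hsub : (i+2)*p - (i+1)*p = p := by
      have : (i+2)*p = (i+1)*p + p := by ring
      omega
    have hdvd : N ∣ p := hsub ▸ Nat.dvd_sub h2' h1'
    have := Nat.le_of_dvd (by omega) hdvd
    omega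
  obtain ⟨k, hk, hkN⟩ := hchoice
  set t := k * p with ht
  have hti : i ≤ t := le_trans (by omega) (Nat.le_mul_of_pos_right _ hp1)
  have ht1 : 1 ≤ t := Nat.mul_pos (by omega) hp1
  have hidem : Idem m (a ^ t) := by
    show (a ^ t) ^ 2 = a ^ t
    rw [← pow_mul, show t * 2 = t + k * p by rw [ht]; ring, key _ hti]
  obtain ⟨r, q, hdec, hr1, hrN, hpow⟩ := pow_reduce ha ht1
  have hrne : r ≠ N := by
    rintro rfl
    exact hkN ⟨q + 1, by rw [hdec, ← hNdef]; ring⟩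
  have : N ≤ r := ord_min hr1 (hpow ▸ hidem)
  omega

lemma mem_orb {a : ZMod m} {x : ZMod m} :
    x ∈ orb m a ↔ ∃ j, 1 ≤ j ∧ j ≤ ord m a ∧ x = a ^ j := by
  simp only [orb, Finset.mem_image, Finset.mem_Icc]
  constructor
  · rintro ⟨j, ⟨hj1, hj2⟩, rfl⟩; exact ⟨j, hj1, hj2, rfl⟩
  · rintro ⟨j, hj1, hj2, rfl⟩; exact ⟨j, ⟨hj1, hj2⟩, rfl⟩

lemma pow_mem_orb {a : ZMod m} (ha : Reg m a) {n : ℕ} (hn : 1 ≤ n) : a ^ n ∈ orb m a := by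
  obtain ⟨r, q, _, hr1, hrN, hpow⟩ := pow_reduce ha hn
  exact mem_orb.mpr ⟨r, hr1, hrN, hpow⟩

end Helpers

/-- With `D = D_m(b,c)`: `orb(b) ∩ orb(c) = orb(b^D)` and
`|orb(b) ∩ orb(c)| = |b|_m / D`. -/
theorem orb_inter_orb (m : ℕ) (hm : 1 ≤ m) (e : ZMod m) (he : Idem m e)
    (b c : ZMod m) (hb : b ∈ Rme m e) (hc : c ∈ Rme m e)
    (D : ℕ) (hD : D = ((Finset.Icc 1 (ord m b)).filter (fun n => b ^ n ∈ orb m c)).gcd id) :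
    orb m b ∩ orb m c = orb m (b ^ D) ∧
      (orb m b ∩ orb m c).card = ord m b / D := by
  haveI : NeZero m := ⟨by omega⟩
  obtain ⟨hbreg, hbN⟩ := hb
  obtain ⟨hcreg, hcM⟩ := hc
  have hN1 : 1 ≤ ord m b := (ord_spec b).1
  have hM1 : 1 ≤ ord m c := (ord_spec c).1
  have hek : ∀ k : ℕ, e ^ (k + 1) = e := by
    intro k
    induction k with
    | zero => simp
    | succ k ih => rw [pow_succ, ih, ← pow_two, he]
  have heorb : e ∈ orb m c := by rw [← hcM]; exact pow_mem_orb hcreg hM1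
  have hmul : ∀ x y : ZMod m, x ∈ orb m c → y ∈ orb m c → x * y ∈ orb m c := by
    intro x y hx hy
    obtain ⟨i, hi1, _, rfl⟩ := mem_orb.mp hx
    obtain ⟨j, hj1, _, rfl⟩ := mem_orb.mp hy
    rw [← pow_add]
    exact pow_mem_orb hcreg (by omega)
  have hadd : ∀ s t : ℕ, 1 ≤ s → 1 ≤ t → b ^ s ∈ orb m c → b ^ t ∈ orb m c →
      b ^ (s + t) ∈ orb m c := by
    intro s t _ _ hs ht
    rw [pow_add]
    exact hmul _ _ hs ht
  have hbe : ∀ n, 1 ≤ n → b ^ n * e = b ^ n := by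
    intro n hn
    rw [← hbN, ← pow_add]
    exact pow_add_ord hbreg hn
  have hsub : ∀ s t : ℕ, 1 ≤ t → t < s → b ^ s ∈ orb m c → b ^ t ∈ orb m c →
      b ^ (s - t) ∈ orb m c := by
    intro s t ht1 hts hs ht
    obtain ⟨j, hj1, _, hbt⟩ := mem_orb.mp ht
    have hjM : j ≤ j * ord m c := Nat.le_mul_of_pos_right _ hM1
    set u := j * ord m c + ord m c - j with hu
    have hu1 : 1 ≤ u := by omega
    have hinv : c ^ j * c ^ u = e := by
      rw [← pow_add, show j + u = ord m c * (j + 1) from by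
        have h1 : j + u = j * ord m c + ord m c := by omega
        have h2 : j * ord m c + ord m c = ord m c * (j + 1) := by ring
        omega, pow_mul, hcM, hek]
    have e1 : b ^ (s - t) = b ^ s * c ^ u := by
      calc b ^ (s - t) = b ^ (s - t) * e := (hbe _ (by omega)).symm
        _ = b ^ (s - t) * (c ^ j * c ^ u) := by rw [hinv]
        _ = (b ^ (s - t) * b ^ t) * c ^ u := by rw [← hbt]; ring
        _ = b ^ s * c ^ u := by rw [← pow_add, show s - t + t = s by omega]
    rw [e1]
    exact hmul _ _ hs (pow_mem_orb hcreg hu1)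
  -- the least exponent d0
  set S : Set ℕ := {n | 1 ≤ n ∧ b ^ n ∈ orb m c} with hS
  have hNS : ord m b ∈ S := ⟨hN1, by rw [hbN]; exact heorb⟩
  set d0 := sInf S with hd0
  have hd0S : d0 ∈ S := Nat.sInf_mem ⟨_, hNS⟩
  obtain ⟨hd01, hd0c⟩ := hd0S
  have hd0N : d0 ≤ ord m b := Nat.sInf_le hNS
  have hmulP : ∀ k, 1 ≤ k → b ^ (k * d0) ∈ orb m c := by
    intro k hk
    induction k with
    | zero => omega
    | succ k ih =>
      rcases Nat.eq_zero_or_pos k with h | h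
      · subst h; simpa using hd0c
      · rw [show (k + 1) * d0 = k * d0 + d0 from by ring]
        exact hadd _ _ (Nat.mul_pos h hd01) hd01 (ih h) hd0c
  have hdvd0 : ∀ n, n ∈ S → d0 ∣ n := by
    intro n hn
    by_contra hnd
    have hr0 : n % d0 ≠ 0 := fun h => hnd (Nat.dvd_of_mod_eq_zero h)
    have hrlt : n % d0 < d0 := Nat.mod_lt _ (by omega)
    have hmd := Nat.mod_add_div' n d0
    have hd0n : d0 ≤ n := Nat.sInf_le hn
    rcases Nat.eq_zero_or_pos (n / d0) with hq | hq
    · have h' : (n / d0) * d0 = 0 := by rw [hq]; ring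
      omega
    · have hP' := hmulP (n / d0) hq
      have hlt : (n / d0) * d0 < n := by omega
      have hsub' := hsub n ((n / d0) * d0) (by omega) hlt hn.2 hP'
      have hrS : n % d0 ∈ S := by
        refine ⟨by omega, ?_⟩
        rwa [show n - (n / d0) * d0 = n % d0 from by omega] at hsub'
      have := Nat.sInf_le hrS
      omega
  -- identify D with d0
  have hDd0 : D = d0 := by
    rw [hD]
    apply Nat.dvd_antisymm
    · exact Finset.gcd_dvd (by
        simp only [Finset.mem_filter, Finset.mem_Icc]
        exact ⟨⟨hd01, hd0N⟩, hd0c⟩)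
    · apply Finset.dvd_gcd
      intro n hn
      simp only [Finset.mem_filter, Finset.mem_Icc] at hn
      exact hdvd0 n ⟨hn.1.1, hn.2⟩
  have hD1 : 1 ≤ D := by omega
  have hDN : D ∣ ord m b := by rw [hDd0]; exact hdvd0 _ hNS
  obtain ⟨K, hNK⟩ := hDN
  have hK1 : 1 ≤ K := by
    rcases Nat.eq_zero_or_pos K with h | h
    · subst h; simp at hNK; omega
    · exact h
  have hordD : ord m (b ^ D) = K := by
    apply le_antisymm
    · apply ord_min hK1
      show ((b ^ D) ^ K) ^ 2 = (b ^ D) ^ K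
      have hK : (b ^ D) ^ K = e := by rw [← pow_mul, ← hNK, hbN]
      rw [hK]
      exact he
    · refine le_csInf ⟨_, exists_idem_pow (b ^ D) |>.choose_spec.1, (exists_idem_pow (b ^ D)).choose_spec.2⟩ ?_
      rintro n ⟨hn1, hn2⟩
      by_contra hlt
      push_neg at hlt
      have hidem : Idem m (b ^ (D * n)) := by rwa [← pow_mul] at hn2
      have h1 : 1 ≤ D * n := Nat.mul_pos hD1 hn1
      have h2 := ord_min h1 hidem
      have h3 : D * n < D * K := by exact (mul_lt_mul_iff_right₀ (show (0:ℕ) < D by omega)).mpr hlt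
      omega
  have haReg : Reg m (b ^ D) := by
    unfold Reg
    rw [hordD, ← pow_mul, show D * (K + 1) = D + ord m b from by rw [hNK]; ring]
    exact pow_add_ord hbreg hD1
  have hmain : orb m b ∩ orb m c = orb m (b ^ D) := by
    ext x
    simp only [Finset.mem_inter]
    constructor
    · rintro ⟨hxb, hxc⟩
      obtain ⟨n, hn1, hnN, rfl⟩ := mem_orb.mp hxb
      have hnD : D ∣ n := by rw [hDd0]; exact hdvd0 n ⟨hn1, hxc⟩
      obtain ⟨j, rfl⟩ := hnD
      have hj1 : 1 ≤ j := by
        rcases Nat.eq_zero_or_pos j with h | h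
        · subst h; simp at hn1
        · exact h
      have hjK : j ≤ K := Nat.le_of_mul_le_mul_left (show D * j ≤ D * K by omega) (by omega)
      refine mem_orb.mpr ⟨j, hj1, ?_, pow_mul b D j⟩
      omega
    · intro hx
      obtain ⟨j, hj1, hjK, rfl⟩ := mem_orb.mp hx
      rw [← pow_mul]
      refine ⟨pow_mem_orb hbreg (Nat.mul_pos hD1 hj1), ?_⟩
      rw [show D * j = j * d0 from by rw [hDd0]; ring]
      exact hmulP j hj1
  have hcard : (orb m (b ^ D)).card = K := by
    unfold orb
    have hinj : Set.InjOn ((b ^ D) ^ ·) ↑(Finset.Icc 1 K) := by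
      intro i hi j hj hij
      simp only [Finset.coe_Icc, Set.mem_Icc] at hi hj
      rcases le_total i j with h | h
      · exact pow_inj haReg hi.1 h (by omega) hij
      · exact (pow_inj haReg hj.1 h (by omega) hij.symm).symm
    rw [hordD, Finset.card_image_of_injOn hinj, Nat.card_Icc]
    omega
  refine ⟨hmain, ?_⟩
  rw [hmain, hcard, hNK]
  exact (Nat.mul_div_cancel_left K (show 0 < D by omega)).symm
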